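/- Let F be a differential field of characteristic zero, let E be an iterated antiderivative extension of F, and let K be a differential subfield of E with K ⊇ F. Then K is algebraically closed in E: every element of E that is algebraic over K lies in K. -/

import Mathlib

/-- A derivation on a field: an additive map satisfying the Leibniz rule. -/
def IsDeriv {E : Type*} [Field E] (D : E → E) : Prop :=
  (∀ x y : E, D (x + y) = D x + D y) ∧ ∀ x y : E, D (x * y) = D x * y + x * D y

/-- A subfield closed under the derivation, i.e. a differential subfield. -/
def IsDiffSubfield {E : Type*} [Field E] (D : E → E) (K : Subfield E) : Prop :=
  ∀ x ∈ K, D x ∈ K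

/-- The subfield generated by a subfield `F` together with a set `S`, i.e. `F(S)`. -/
def adjoinSF {E : Type*} [Field E] (F : Subfield E) (S : Set E) : Subfield E :=
  Subfield.closure (↑F ∪ S)

/-- `ζ 0, …, ζ (n-1)` are iterated antiderivatives of `F`:
`(ζ i)' ∈ F(ζ 0, …, ζ (i-1))` for every `i`. -/
def IsIterAntideriv {E : Type*} [Field E] (D : E → E) (F : Subfield E) {n : ℕ}
    (ζ : Fin n → E) : Prop :=
  ∀ i, D (ζ i) ∈ adjoinSF F (ζ '' {j | j < i})

/-- `M` is a no new constants extension of `K`: the constants of `M` are exactly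
the constants of `K`. -/
def NoNewConstants {E : Type*} [Field E] (D : E → E) (K M : Subfield E) : Prop :=
  K ≤ M ∧ ∀ x ∈ M, D x = 0 → x ∈ K

/-- `K` is an iterated antiderivative extension of `F`. -/
def IsIAE {E : Type*} [Field E] (D : E → E) (F K : Subfield E) : Prop :=
  NoNewConstants D F K ∧
    ∃ (n : ℕ) (ζ : Fin n → E), IsIterAntideriv D F ζ ∧ K = adjoinSF F (Set.range ζ)

/-- `K` is an antiderivative extension of `F`. -/
def IsAE {E : Type*} [Field E] (D : E → E) (F K : Subfield E) : Prop :=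
  NoNewConstants D F K ∧
    ∃ (n : ℕ) (ζ : Fin n → E), (∀ i, D (ζ i) ∈ (F : Set E)) ∧ K = adjoinSF F (Set.range ζ)

/-- A differential automorphism of `E` over `F`: a field automorphism fixing `F`
pointwise and commuting with the derivation. -/
def IsDiffAut {E : Type*} [Field E] (D : E → E) (F : Subfield E) (σ : E ≃+* E) : Prop :=
  (∀ x ∈ F, σ x = x) ∧ ∀ y : E, σ (D y) = D (σ y)

/-- `M` is a minimal differential field extension of `K`. -/
def IsMinimalDiffExt {E : Type*} [Field E] (D : E → E) (K M : Subfield E) : Prop :=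
  IsDiffSubfield D M ∧ K < M ∧
    ∀ L : Subfield E, IsDiffSubfield D L → K ≤ L → L ≤ M → L = K ∨ L = M

/-- The field of constants of a differential subfield `F`. -/
def constantsOf {E : Type*} [Field E] (D : E → E) (hD : IsDeriv D) (F : Subfield E) :
    Subfield E where
  carrier := {x : E | x ∈ F ∧ D x = 0}
  zero_mem' := by
    refine ⟨F.zero_mem, ?_⟩
    have h := hD.1 0 0
    simp only [add_zero] at h
    exact left_eq_add.mp h
  one_mem' := by
    refine ⟨F.one_mem, ?_⟩
    have h := hD.2 1 1
    simp only [mul_one, one_mul] at h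
    exact left_eq_add.mp h
  add_mem' := by
    rintro a b ⟨haF, ha⟩ ⟨hbF, hb⟩
    exact ⟨F.add_mem haF hbF, by rw [hD.1 a b, ha, hb, add_zero]⟩
  mul_mem' := by
    rintro a b ⟨haF, ha⟩ ⟨hbF, hb⟩
    exact ⟨F.mul_mem haF hbF, by rw [hD.2 a b, ha, hb, zero_mul, mul_zero, add_zero]⟩
  neg_mem' := by
    rintro a ⟨haF, ha⟩
    refine ⟨F.neg_mem haF, ?_⟩
    have h0 : D 0 = 0 := by
      have h := hD.1 0 0
      simp only [add_zero] at h
      exact left_eq_add.mp h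
    have h := hD.1 a (-a)
    rw [add_neg_cancel, h0, ha, zero_add] at h
    exact h.symm
  inv_mem' := by
    rintro a ⟨haF, ha⟩
    refine ⟨F.inv_mem haF, ?_⟩
    by_cases h0 : a = 0
    · subst h0; rw [inv_zero]; exact ha
    · have h1 : D 1 = 0 := by
        have h := hD.2 1 1
        simp only [mul_one, one_mul] at h
        exact left_eq_add.mp h
      have h := hD.2 a a⁻¹
      rw [mul_inv_cancel₀ h0, h1, ha, zero_mul, zero_add] at h
      rcases mul_eq_zero.mp h.symm with h' | h'
      · exact absurd h' h0
      · exact h'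

/-- The antiderivative closure of `L` in `E`: the subfield generated over `L`
by all antiderivatives of `L` lying in `E`. -/
def adCl {E : Type*} [Field E] (D : E → E) (L : Subfield E) : Subfield E :=
  adjoinSF L {x : E | D x ∈ L}

/-- The differential subfield generated by `F` and `u`, i.e. `F⟨u⟩ = F(u, u', u'', …)`. -/
def diffAdjoin {E : Type*} [Field E] (D : E → E) (F : Subfield E) (u : E) : Subfield E :=
  sInf {M : Subfield E | IsDiffSubfield D M ∧ F ≤ M ∧ u ∈ M}

/-- The transcendence degree of `K` over `F` (both viewed inside an ambient field `E`):
the supremum of cardinalities of subsets of `K` that are algebraically independent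
over `F`. -/
noncomputable def trdegSF {E : Type*} [Field E] (F K : Subfield E) : Cardinal :=
  ⨆ s : {s : Set E // s ⊆ (K : Set E) ∧ AlgebraicIndependent F ((↑) : s → E)},
    Cardinal.mk s.1


section Aux

open Polynomial

variable {E : Type*} [Field E]

/-! ### adjoinSF lemmas -/

theorem le_adjoinSF (F : Subfield E) (S : Set E) : F ≤ adjoinSF F S :=
  fun _ hx => Subfield.subset_closure (Or.inl hx)

theorem subset_adjoinSF (F : Subfield E) (S : Set E) : S ⊆ ↑(adjoinSF F S) :=
  fun _ hx => Subfield.subset_closure (Or.inr hx)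

theorem adjoinSF_le {F M : Subfield E} {S : Set E} (h1 : F ≤ M) (h2 : S ⊆ ↑M) :
    adjoinSF F S ≤ M :=
  Subfield.closure_le.2 (Set.union_subset h1 h2)

theorem adjoinSF_eq_self {F : Subfield E} {S : Set E} (h : S ⊆ ↑F) : adjoinSF F S = F :=
  le_antisymm (adjoinSF_le le_rfl h) (le_adjoinSF F S)

theorem adjoinSF_adjoinSF (F : Subfield E) (S T : Set E) :
    adjoinSF (adjoinSF F S) T = adjoinSF F (S ∪ T) := by
  apply le_antisymm
  · refine adjoinSF_le (adjoinSF_le ?_ ?_) ?_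
    · exact le_adjoinSF F _
    · exact fun x hx => subset_adjoinSF F _ (Or.inl hx)
    · exact fun x hx => subset_adjoinSF F _ (Or.inr hx)
  · refine adjoinSF_le ?_ ?_
    · exact le_trans (le_adjoinSF F S) (le_adjoinSF _ T)
    · refine Set.union_subset ?_ ?_
      · exact fun x hx => le_adjoinSF _ T (subset_adjoinSF F S hx)
      · exact subset_adjoinSF _ T

/-! ### Derivation lemmas -/

variable {D : E → E}

theorem IsDeriv.zero (hD : IsDeriv D) : D 0 = 0 := by
  have h := hD.1 0 0
  simp only [add_zero] at h
  exact left_eq_add.mp h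

theorem IsDeriv.one (hD : IsDeriv D) : D 1 = 0 := by
  have h := hD.2 1 1
  simp only [mul_one, one_mul] at h
  exact left_eq_add.mp h

theorem IsDeriv.natCast (hD : IsDeriv D) (n : ℕ) : D (n : E) = 0 := by
  induction n with
  | zero => simpa using hD.zero
  | succ k ih => push_cast; rw [hD.1, ih, hD.one, add_zero]

theorem IsDeriv.neg (hD : IsDeriv D) (a : E) : D (-a) = -D a := by
  have h := hD.1 a (-a)
  rw [add_neg_cancel, hD.zero] at h
  linear_combination -h

theorem IsDeriv.inv_eq (hD : IsDeriv D) {a : E} (ha : a ≠ 0) :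
    D a⁻¹ = -(D a * a⁻¹ * a⁻¹) := by
  have h := hD.2 a a⁻¹
  rw [mul_inv_cancel₀ ha, hD.one] at h
  have h2 : a * D a⁻¹ = -(D a * a⁻¹) := by linear_combination -h
  have h4 : D a⁻¹ = a⁻¹ * (a * D a⁻¹) := by
    rw [← mul_assoc, inv_mul_cancel₀ ha, one_mul]
  rw [h4, h2]
  ring

theorem IsDeriv.inv_of_eq_zero (hD : IsDeriv D) {a : E} (ha : D a = 0) : D a⁻¹ = 0 := by
  by_cases h0 : a = 0
  · subst h0; rw [inv_zero]; exact ha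
  · rw [hD.inv_eq h0, ha]; ring

theorem IsDeriv.pow (hD : IsDeriv D) (t : E) (n : ℕ) :
    D (t ^ n) = (n : E) * t ^ (n - 1) * D t := by
  induction n with
  | zero => simpa using hD.one
  | succ k ih =>
    rw [pow_succ, hD.2, ih]
    cases k with
    | zero => simp
    | succ m =>
      push_cast [Nat.add_sub_cancel]
      linear_combination ((m : E) + 1) * D t * (pow_succ t m)

/-- The subfield generated over a differential subfield by elements whose derivatives
lie in the generated subfield is itself a differential subfield. -/
theorem isDiffSubfield_adjoinSF (hD : IsDeriv D) {K : Subfield E} (hK : IsDiffSubfield D K)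
    {S : Set E} (hS : ∀ x ∈ S, D x ∈ adjoinSF K S) : IsDiffSubfield D (adjoinSF K S) := by
  set L := adjoinSF K S with hL
  let M : Subfield E :=
    { carrier := {x : E | x ∈ L ∧ D x ∈ L}
      zero_mem' := ⟨L.zero_mem, by rw [hD.zero]; exact L.zero_mem⟩
      one_mem' := ⟨L.one_mem, by rw [hD.one]; exact L.zero_mem⟩
      add_mem' := by
        rintro a b ⟨ha, ha'⟩ ⟨hb, hb'⟩
        exact ⟨L.add_mem ha hb, by rw [hD.1]; exact L.add_mem ha' hb'⟩
      mul_mem' := by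
        rintro a b ⟨ha, ha'⟩ ⟨hb, hb'⟩
        exact ⟨L.mul_mem ha hb, by rw [hD.2]; exact L.add_mem (L.mul_mem ha' hb) (L.mul_mem ha hb')⟩
      neg_mem' := by
        rintro a ⟨ha, ha'⟩
        exact ⟨L.neg_mem ha, by rw [hD.neg]; exact L.neg_mem ha'⟩
      inv_mem' := by
        rintro a ⟨ha, ha'⟩
        refine ⟨L.inv_mem ha, ?_⟩
        by_cases h0 : a = 0
        · subst h0; rw [inv_zero]; exact ha'
        · rw [hD.inv_eq h0]
          exact L.neg_mem (L.mul_mem (L.mul_mem ha' (L.inv_mem ha)) (L.inv_mem ha)) }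
  have hle : L ≤ M := by
    rw [hL]
    refine adjoinSF_le ?_ ?_
    · intro x hx
      exact ⟨le_adjoinSF K S hx, le_adjoinSF K S (hK x hx)⟩
    · intro x hx
      exact ⟨subset_adjoinSF K S hx, hS x hx⟩
  exact fun x hx => (hle hx).2

/-! ### Lifting algebraicity along an inclusion of subfields -/

theorem isAlgebraic_of_le {K K' : Subfield E} (h : K ≤ K') {u : E}
    (hu : IsAlgebraic K u) : IsAlgebraic K' u := by
  obtain ⟨p, hp0, hpu⟩ := hu
  have hinj : Function.Injective (Subfield.inclusion h) := by
    intro a b hab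
    have h2 : ((Subfield.inclusion h a : K') : E) = ((Subfield.inclusion h b : K') : E) :=
      congrArg _ hab
    exact Subtype.ext h2
  refine ⟨p.map (Subfield.inclusion h), ?_, ?_⟩
  · exact (Polynomial.map_ne_zero_iff hinj).2 hp0
  · have hcomp : (algebraMap K' E).comp (Subfield.inclusion h) = algebraMap K E :=
      RingHom.ext fun x => rfl
    rw [aeval_def, eval₂_map, hcomp, ← aeval_def]
    exact hpu

/-! ### An algebraic antiderivative already lies in the base differential field -/

theorem algAntideriv_mem [CharZero E] (hD : IsDeriv D) {K : Subfield E}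
    (hK : IsDiffSubfield D K) (hC : ∀ x : E, D x = 0 → x ∈ K) {t : E} (htD : D t ∈ K)
    (ht : IsAlgebraic K t) : t ∈ K := by
  classical
  have hti : IsIntegral K t := ht.isIntegral
  set p := minpoly K t with hp
  have hN : 0 < p.natDegree := minpoly.natDegree_pos hti
  set N := p.natDegree with hNdef
  set dc : ℕ → K := fun i =>
    (⟨D ((p.coeff i : E)), hK _ (p.coeff i).2⟩ : K) +
      ((i + 1 : ℕ) : K) * (⟨D t, htD⟩ : K) * p.coeff (i + 1) with hdc
  have hdccoe : ∀ i, ((dc i : K) : E)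
      = D ((p.coeff i : E)) + ((i + 1 : ℕ) : E) * D t * ((p.coeff (i + 1) : E)) := by
    intro i
    push_cast [hdc]
    ring
  set q : Polynomial K := ∑ i ∈ Finset.range (N + 1), Polynomial.C (dc i) * Polynomial.X ^ i
    with hq
  have hcN : ((p.coeff N : E)) = 1 := by
    have := (minpoly.monic hti).coeff_natDegree
    rw [← hNdef] at this
    rw [this]
    rfl
  have hcN1 : ((p.coeff (N + 1) : E)) = 0 := by
    have : p.coeff (N + 1) = 0 := Polynomial.coeff_eq_zero_of_natDegree_lt (by omega)
    rw [this]
    rfl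
  -- q evaluates to zero at t
  have hqeval : Polynomial.aeval t q = 0 := by
    have hpe : (Polynomial.aeval t p : E)
        = ∑ i ∈ Finset.range (N + 1), (p.coeff i : E) * t ^ i := by
      rw [Polynomial.aeval_eq_sum_range]
      exact Finset.sum_congr rfl fun i _ => Algebra.smul_def _ _
    have hD0 : D (∑ i ∈ Finset.range (N + 1), (p.coeff i : E) * t ^ i) = 0 := by
      rw [← hpe, minpoly.aeval, hD.zero]
    let Dh : E →+ E := AddMonoidHom.mk' D hD.1
    have hsum : D (∑ i ∈ Finset.range (N + 1), (p.coeff i : E) * t ^ i)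
        = ∑ i ∈ Finset.range (N + 1), D ((p.coeff i : E) * t ^ i) :=
      map_sum Dh _ _
    have hterm : ∀ i, D ((p.coeff i : E) * t ^ i)
        = D ((p.coeff i : E)) * t ^ i + (p.coeff i : E) * ((i : E) * t ^ (i - 1) * D t) := by
      intro i
      rw [hD.2, hD.pow]
    have haq : (Polynomial.aeval t q : E)
        = ∑ i ∈ Finset.range (N + 1), ((dc i : K) : E) * t ^ i := by
      rw [hq, map_sum]
      refine Finset.sum_congr rfl fun i _ => ?_
      rw [map_mul, map_pow, Polynomial.aeval_C, Polynomial.aeval_X]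
      rfl
    rw [haq]
    rw [hsum] at hD0
    have hsplit : ∑ i ∈ Finset.range (N + 1), D ((p.coeff i : E) * t ^ i)
        = (∑ i ∈ Finset.range (N + 1), D ((p.coeff i : E)) * t ^ i)
          + ∑ i ∈ Finset.range (N + 1), (p.coeff i : E) * ((i : E) * t ^ (i - 1) * D t) := by
      rw [← Finset.sum_add_distrib]
      exact Finset.sum_congr rfl fun i _ => hterm i
    have hshift : ∑ i ∈ Finset.range (N + 1), (p.coeff i : E) * ((i : E) * t ^ (i - 1) * D t)
        = ∑ i ∈ Finset.range (N + 1), ((i + 1 : ℕ) : E) * D t * ((p.coeff (i + 1) : E)) * t ^ i := by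
      rw [Finset.sum_range_succ' (fun i => (p.coeff i : E) * ((i : E) * t ^ (i - 1) * D t)) N]
      rw [Finset.sum_range_succ (fun i => ((i + 1 : ℕ) : E) * D t * ((p.coeff (i + 1) : E)) * t ^ i) N]
      rw [hcN1]
      simp only [Nat.cast_zero, zero_mul, mul_zero, add_zero, Nat.add_sub_cancel]
      refine Finset.sum_congr rfl fun i _ => ?_
      push_cast
      ring
    calc ∑ i ∈ Finset.range (N + 1), ((dc i : K) : E) * t ^ i
        = ∑ i ∈ Finset.range (N + 1),
            (D ((p.coeff i : E)) * t ^ i + ((i + 1 : ℕ) : E) * D t * ((p.coeff (i + 1) : E)) * t ^ i) := by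
          refine Finset.sum_congr rfl fun i _ => ?_
          rw [hdccoe]
          ring
      _ = (∑ i ∈ Finset.range (N + 1), D ((p.coeff i : E)) * t ^ i)
          + ∑ i ∈ Finset.range (N + 1), ((i + 1 : ℕ) : E) * D t * ((p.coeff (i + 1) : E)) * t ^ i := by
          rw [← Finset.sum_add_distrib]
      _ = (∑ i ∈ Finset.range (N + 1), D ((p.coeff i : E)) * t ^ i)
          + ∑ i ∈ Finset.range (N + 1), (p.coeff i : E) * ((i : E) * t ^ (i - 1) * D t) := by
          rw [hshift]
      _ = ∑ i ∈ Finset.range (N + 1), D ((p.coeff i : E) * t ^ i) := hsplit.symm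
      _ = 0 := hD0
  -- coefficients of q
  have hqcoeff : ∀ m, q.coeff m = if m ∈ Finset.range (N + 1) then dc m else 0 := by
    intro m
    rw [hq, Polynomial.finset_sum_coeff]
    simp only [Polynomial.coeff_C_mul, Polynomial.coeff_X_pow, mul_ite, mul_one, mul_zero]
    exact Finset.sum_ite_eq (Finset.range (N + 1)) m dc
  have hdcN : dc N = 0 := by
    have : ((dc N : K) : E) = 0 := by
      rw [hdccoe, hcN1]
      have h1 : D ((p.coeff N : E)) = 0 := by rw [hcN, hD.one]
      rw [h1]
      ring
    exact Subtype.ext this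
  -- q must vanish identically
  have hq0 : q = 0 := by
    by_contra hq0
    have hdeg := minpoly.degree_le_of_ne_zero K t hq0 hqeval
    have hlt : q.degree < (N : WithBot ℕ) := by
      rw [Polynomial.degree_lt_iff_coeff_zero]
      intro m hm
      rw [hqcoeff]
      rcases eq_or_lt_of_le hm with rfl | hlt'
      · simp [hdcN]
      · rw [if_neg]
        simp only [Finset.mem_range]
        omega
    have hdp : p.degree = (N : WithBot ℕ) := Polynomial.degree_eq_natDegree (minpoly.ne_zero hti)
    rw [← hp, hdp] at hdeg
    exact absurd (lt_of_le_of_lt hdeg hlt) (lt_irrefl _)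
  -- extract the subleading coefficient
  obtain ⟨M, hM⟩ : ∃ M, N = M + 1 := ⟨N - 1, by omega⟩
  have hdcM : ((dc M : K) : E) = 0 := by
    have : q.coeff M = 0 := by rw [hq0]; rfl
    have h2 := hqcoeff M
    rw [this, if_pos (Finset.mem_range.2 (by omega))] at h2
    rw [← h2]
    rfl
  rw [hdccoe] at hdcM
  have hMN : M + 1 = N := hM.symm
  rw [hMN, hcN, mul_one] at hdcM
  -- now D (coeff M) + N * D t = 0
  have hm0 : ((N : ℕ) : E) ≠ 0 := Nat.cast_ne_zero.2 (by omega)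
  set s : E := t + (p.coeff M : E) / ((N : ℕ) : E) with hs
  have hDs : D s = 0 := by
    rw [hs, div_eq_mul_inv, hD.1, hD.2, hD.inv_of_eq_zero (hD.natCast N), mul_zero, add_zero]
    have hDcM : D ((p.coeff M : E)) = -(((N : ℕ) : E) * D t) := by linear_combination hdcM
    rw [hDcM]
    field_simp
    ring
  have hsK : s ∈ K := hC s hDs
  have hcoef : (p.coeff M : E) ∈ K := (p.coeff M).2
  have hnK : ((N : ℕ) : E) ∈ K := by
    exact_mod_cast natCast_mem K N
  have : t = s - (p.coeff M : E) / ((N : ℕ) : E) := by rw [hs]; ring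
  rw [this]
  exact K.sub_mem hsK (K.div_mem hcoef hnK)

/-! ### A base field is algebraically closed in a simple transcendental extension -/

set_option synthInstance.maxHeartbeats 400000 in
set_option maxHeartbeats 1000000 in
theorem mem_of_mem_adjoin_transcendental (K : Subfield E) {t u : E}
    (ht : ¬IsAlgebraic K t) (hu : IsAlgebraic K u) (hmem : u ∈ adjoinSF K {t}) : u ∈ K := by
  classical
  have hrange : Set.range (algebraMap K E) = (K : Set E) := by
    ext x
    constructor
    · rintro ⟨y, rfl⟩; exact y.2
    · intro hx; exact ⟨⟨x, hx⟩, rfl⟩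
  obtain ⟨y, hy, z, hz, hyz⟩ := Subfield.mem_closure_iff.1 hmem
  have h1 : ∀ w : E, w ∈ Subring.closure ((K : Set E) ∪ {t}) →
      ∃ P : Polynomial K, Polynomial.aeval t P = w := by
    intro w hw
    have hw2 : w ∈ Algebra.adjoin K ({t} : Set E) := by
      rw [Algebra.mem_adjoin_iff, hrange]
      exact hw
    rw [Algebra.adjoin_singleton_eq_range_aeval] at hw2
    obtain ⟨P, hP⟩ := hw2
    exact ⟨P, hP⟩
  obtain ⟨P, hP⟩ := h1 y hy
  obtain ⟨Q, hQ⟩ := h1 z hz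
  by_cases hz0 : z = 0
  · rw [← hyz, hz0, div_zero]
    exact K.zero_mem
  have hy_eq : y = u * z := by
    field_simp at hyz
    linear_combination hyz
  -- pass to the intermediate field K⟮u⟯
  have hti : IsIntegral K u := hu.isIntegral
  set M := IntermediateField.adjoin K ({u} : Set E) with hMdef
  haveI halg : Algebra.IsAlgebraic K M := IntermediateField.isAlgebraic_adjoin_simple hti
  have htM : ¬IsAlgebraic M t := by
    intro h
    apply ht
    haveI : Algebra.IsIntegral K M := Algebra.isAlgebraic_iff_isIntegral.1 halg
    exact (isIntegral_trans t h.isIntegral).isAlgebraic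
  set u' : M := ⟨u, IntermediateField.mem_adjoin_simple_self K u⟩ with hu'def
  set P' := P.map (algebraMap K M) with hP'def
  set Q' := Q.map (algebraMap K M) with hQ'def
  have heval : Polynomial.aeval t (Polynomial.C u' * Q' - P') = 0 := by
    rw [map_sub, map_mul, Polynomial.aeval_C, hP'def, hQ'def,
      Polynomial.aeval_map_algebraMap, Polynomial.aeval_map_algebraMap, hP, hQ]
    have : (algebraMap M E) u' = u := rfl
    rw [this, ← hy_eq]
    ring
  have h0 : Polynomial.C u' * Q' = P' := by
    by_contra h
    exact htM ⟨_, sub_ne_zero.2 h, heval⟩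
  have hQne : Q ≠ 0 := by
    intro h
    apply hz0
    rw [← hQ, h, map_zero]
  have hQ'ne : Q' ≠ 0 := by
    rw [hQ'def]
    exact (Polynomial.map_ne_zero_iff (algebraMap K M).injective).2 hQne
  set d := Q'.natDegree with hd
  have hQcoeff : Q'.coeff d ≠ 0 := Polynomial.leadingCoeff_ne_zero.2 hQ'ne
  have hcoeq : u' * Q'.coeff d = P'.coeff d := by
    have := congrArg (fun r : Polynomial M => r.coeff d) h0
    simpa [Polynomial.coeff_C_mul] using this
  have hQmap : Q'.coeff d = algebraMap K M (Q.coeff d) := Polynomial.coeff_map _ _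
  have hPmap : P'.coeff d = algebraMap K M (P.coeff d) := Polynomial.coeff_map _ _
  have hQd : Q.coeff d ≠ 0 := by
    intro h
    apply hQcoeff
    rw [hQmap, h, map_zero]
  have hu'eq : u' = algebraMap K M (P.coeff d / Q.coeff d) := by
    rw [map_div₀]
    rw [eq_div_iff (by rw [← hQmap]; exact hQcoeff)]
    rw [← hQmap, ← hPmap]
    exact hcoeq
  have : u = ((P.coeff d / Q.coeff d : K) : E) := by
    have h2 := congrArg (algebraMap M E) hu'eq
    rw [← IsScalarTower.algebraMap_apply K M E] at h2
    exact h2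
  rw [this]
  exact (P.coeff d / Q.coeff d).2

/-! ### The main induction -/

theorem key_induction [CharZero E] (hD : IsDeriv D) :
    ∀ (n : ℕ) (K : Subfield E), IsDiffSubfield D K → (∀ x : E, D x = 0 → x ∈ K) →
      ∀ ζ : Fin n → E, IsIterAntideriv D K ζ → adjoinSF K (Set.range ζ) = ⊤ →
        ∀ u : E, IsAlgebraic K u → u ∈ K := by
  intro n
  induction n with
  | zero =>
    intro K hK hC ζ hζ htop u hu
    have : Set.range ζ = ∅ := Set.range_eq_empty ζ
    rw [this, adjoinSF_eq_self (Set.empty_subset _)] at htop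
    rw [htop]
    trivial
  | succ n ih =>
    intro K hK hC ζ hζ htop u hu
    set t := ζ 0 with htdef
    have htD : D t ∈ K := by
      have h := hζ 0
      have himg : ζ '' {j | j < 0} = ∅ := by
        convert Set.image_empty ζ
        ext j
        simp [Fin.not_lt_zero]
      rwa [himg, adjoinSF_eq_self (Set.empty_subset _)] at h
    set ζ' : Fin n → E := fun i => ζ i.succ with hζ'def
    have hrange : Set.range ζ = insert t (Set.range ζ') := Fin.range_fin_succ ζ
    have himg2 : ∀ i : Fin n, ζ '' {j | j < i.succ} ⊆ insert t (ζ' '' {j | j < i}) := by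
      rintro i x ⟨j, hj, rfl⟩
      rcases Fin.eq_zero_or_eq_succ j with rfl | ⟨k, rfl⟩
      · exact Set.mem_insert _ _
      · refine Set.mem_insert_of_mem _ ⟨k, ?_, rfl⟩
        exact Fin.succ_lt_succ_iff.1 hj
    by_cases hta : IsAlgebraic K t
    · have htK : t ∈ K := algAntideriv_mem hD hK hC htD hta
      apply ih K hK hC ζ' ?_ ?_ u hu
      · intro i
        have h1 := hζ i.succ
        have h2 : adjoinSF K (ζ '' {j | j < i.succ}) ≤ adjoinSF K (ζ' '' {j | j < i}) := by
          refine adjoinSF_le (le_adjoinSF _ _) ?_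
          refine subset_trans (himg2 i) ?_
          rw [Set.insert_subset_iff]
          exact ⟨le_adjoinSF _ _ htK, subset_adjoinSF _ _⟩
        exact h2 h1
      · apply le_antisymm le_top
        rw [← htop]
        refine adjoinSF_le (le_adjoinSF _ _) ?_
        rw [hrange, Set.insert_subset_iff]
        exact ⟨le_adjoinSF _ _ htK, subset_adjoinSF _ _⟩
    · set K' := adjoinSF K {t} with hK'def
      have hKK' : K ≤ K' := le_adjoinSF K _
      have htK' : t ∈ K' := subset_adjoinSF K _ rfl
      have hK' : IsDiffSubfield D K' :=
        isDiffSubfield_adjoinSF hD hK fun x hx => by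
          rw [Set.mem_singleton_iff] at hx
          subst hx
          exact le_adjoinSF K _ htD
      have hC' : ∀ x : E, D x = 0 → x ∈ K' := fun x hx => hKK' (hC x hx)
      have hmem : u ∈ K' := by
        apply ih K' hK' hC' ζ' ?_ ?_ u (isAlgebraic_of_le hKK' hu)
        · intro i
          have h1 := hζ i.succ
          have h2 : adjoinSF K (ζ '' {j | j < i.succ}) ≤ adjoinSF K' (ζ' '' {j | j < i}) := by
            refine adjoinSF_le (le_trans hKK' (le_adjoinSF _ _)) ?_
            refine subset_trans (himg2 i) ?_
            rw [Set.insert_subset_iff]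
            exact ⟨le_adjoinSF _ _ htK', subset_adjoinSF _ _⟩
          exact h2 h1
        · rw [hK'def, adjoinSF_adjoinSF, Set.singleton_union, ← hrange]
          exact htop
      exact mem_of_mem_adjoin_transcendental K hta hu hmem

theorem statement5_aux {E : Type*} [Field E] [CharZero E] (D : E → E) (hD : IsDeriv D)
    (F K : Subfield E)
    (hF : IsDiffSubfield D F) (hK : IsDiffSubfield D K)
    (hIAE : IsIAE D F ⊤) (hFK : F ≤ K)
    (u : E) (hu : IsAlgebraic K u) :
    u ∈ K := by
  obtain ⟨⟨hle, hcon⟩, n, ζ, hiter, htop⟩ := hIAE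
  have hC : ∀ x : E, D x = 0 → x ∈ K := fun x hx => hFK (hcon x trivial hx)
  have hiter' : IsIterAntideriv D K ζ := by
    intro i
    exact adjoinSF_le (le_trans hFK (le_adjoinSF _ _)) (subset_adjoinSF _ _) (hiter i)
  have htop' : adjoinSF K (Set.range ζ) = ⊤ := by
    apply le_antisymm le_top
    rw [htop]
    exact adjoinSF_le (le_trans hFK (le_adjoinSF _ _)) (subset_adjoinSF _ _)
  exact key_induction hD n K hK hC ζ hiter' htop' u hu

end Aux

/-- if `E` (the ambient field, `⊤`) is an iterated antiderivative
extension of `F` and `K ⊇ F` is a differential subfield of `E`, then `K` is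
algebraically closed in `E`: every element of `E` algebraic over `K` lies in `K`. -/
theorem statement5 {E : Type*} [Field E] [CharZero E] (D : E → E) (hD : IsDeriv D)
    (F K : Subfield E)
    (hF : IsDiffSubfield D F) (hK : IsDiffSubfield D K)
    (hIAE : IsIAE D F ⊤) (hFK : F ≤ K)
    (u : E) (hu : IsAlgebraic K u) :
    u ∈ K := by
  exact statement5_aux D hD F K hF hK hIAE hFK u hu
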